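/- arXiv:1609.06637 — 4 statements merged into one kernel-verified Lean document; each statement's English description precedes it below -/
import Mathlib

section
/- Every continuous map f from the n-disc Dⁿ to itself has a fixed point. -/
/-!
Brouwer's fixed point theorem: every continuous map `f` from the `n`-disc `Dⁿ`
(the closed unit ball of `ℝⁿ`) into itself has a fixed point.

Proof (Milnor's analytic argument):
* If `f` had no fixed point, a smooth approximation `q` (via convolution with a bump
  function) of `f` would also have no fixed point on the disc.
* From the smooth fixed-point-free `q` one constructs a smooth retraction `r` of (a
  neighbourhood of) the disc onto the sphere, fixing the sphere pointwise.
* For `r` a smooth retraction, the maps `F t = id + t • (r - id)` are injective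
  diffeomorphisms of the disc for small `t`, so `∫_D det(DF t) = vol(D)` there; this
  integral is a polynomial in `t` (Lagrange interpolation of `det(1 + tA)`), hence it
  is constantly `vol(D)`, contradicting `det(DF 1) = det(Dr) = 0`.
-/

open Metric Set MeasureTheory Polynomial Matrix Finset
open scoped RealInnerProductSpace Topology Convolution

/-- The polynomial `t ↦ det (1 + t • A)`. -/
noncomputable def detPoly (A : Matrix (Fin n) (Fin n) ℝ) : ℝ[X] :=
  ((1 : Matrix (Fin n) (Fin n) ℝ[X]) + (X : ℝ[X]) • A.map C).det

theorem eval_detPoly (A : Matrix (Fin n) (Fin n) ℝ) (t : ℝ) :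
    (detPoly A).eval t = ((1 : Matrix (Fin n) (Fin n) ℝ) + t • A).det := by
  have h := RingHom.map_det (Polynomial.evalRingHom t)
    ((1 : Matrix (Fin n) (Fin n) ℝ[X]) + (X : ℝ[X]) • A.map C)
  have h2 : (Polynomial.evalRingHom t).mapMatrix
      ((1 : Matrix (Fin n) (Fin n) ℝ[X]) + (X : ℝ[X]) • A.map C)
      = (1 : Matrix (Fin n) (Fin n) ℝ) + t • A := by
    ext i j
    simp only [RingHom.mapMatrix_apply, Matrix.map_apply, Matrix.add_apply, Matrix.smul_apply,
      Matrix.one_apply, map_add, smul_eq_mul, Matrix.map_apply, coe_evalRingHom, eval_mul, eval_X,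
      eval_C, apply_ite (Polynomial.eval t), eval_one, eval_zero]
  rw [detPoly, ← h2, ← h]
  rfl

theorem degree_detPoly_lt (A : Matrix (Fin n) (Fin n) ℝ) :
    (detPoly A).degree < (n + 1 : ℕ) := by
  have hnd : (detPoly A).natDegree ≤ n := by
    rw [detPoly, Matrix.det_apply']
    refine (Polynomial.natDegree_sum_le _ _).trans ?_
    rw [Finset.fold_max_le]
    refine ⟨Nat.zero_le _, fun σ _ => ?_⟩
    refine (Polynomial.natDegree_mul_le).trans ?_
    have h1 : (((Equiv.Perm.sign σ : ℤ) : ℝ[X])).natDegree = 0 := natDegree_intCast _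
    rw [h1, zero_add]
    refine (Polynomial.natDegree_prod_le _ _).trans ?_
    have : ∀ i : Fin n, (((1 : Matrix (Fin n) (Fin n) ℝ[X]) + (X : ℝ[X]) • A.map C) (σ i) i).natDegree ≤ 1 := by
      intro i
      refine (Polynomial.natDegree_add_le _ _).trans ?_
      simp only [Matrix.one_apply, Matrix.smul_apply, Matrix.map_apply, smul_eq_mul]
      rcases eq_or_ne (σ i) i with h | h
      · simp only [h, if_pos rfl]
        refine max_le (by simp) ?_
        refine (Polynomial.natDegree_mul_le).trans ?_
        simp
      · show max (((1 : Matrix (Fin n) (Fin n) ℝ[X]) (σ i) i).natDegree) ((X * C (A (σ i) i)).natDegree) ≤ 1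
        rw [Matrix.one_apply_ne h]
        refine max_le (by simp) ?_
        refine (Polynomial.natDegree_mul_le).trans ?_
        simp
    calc (∑ i : Fin n, (((1 : Matrix (Fin n) (Fin n) ℝ[X]) + (X : ℝ[X]) • A.map C) (σ i) i).natDegree)
        ≤ ∑ _i : Fin n, 1 := Finset.sum_le_sum (fun i _ => this i)
      _ = n := by simp
  calc (detPoly A).degree ≤ (detPoly A).natDegree := Polynomial.degree_le_natDegree
    _ ≤ (n : WithBot ℕ) := by exact_mod_cast hnd
    _ < ((n + 1 : ℕ) : WithBot ℕ) := by exact_mod_cast Nat.lt_succ_self n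


open Metric Set

theorem det_one_add_pos {E : Type*} [NormedAddCommGroup E] [NormedSpace ℝ E]
    [FiniteDimensional ℝ E] (L : E →L[ℝ] E) (h : ‖L‖ < 1) :
    0 < ContinuousLinearMap.det (1 + L) := by
  have hCS : CompleteSpace E := FiniteDimensional.complete ℝ E
  have hne : ∀ s ∈ Icc (0:ℝ) 1, ContinuousLinearMap.det (1 + s • L) ≠ 0 := by
    intro s hs
    have hsl : ‖s • L‖ < 1 := by
      rw [norm_smul s L]
      calc ‖s‖ * ‖L‖ ≤ 1 * ‖L‖ := by
            apply mul_le_mul_of_nonneg_right _ (norm_nonneg L)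
            rw [Real.norm_eq_abs, abs_of_nonneg hs.1]; exact hs.2
        _ < 1 := by rwa [one_mul]
    have hn : ‖-(s • L)‖ < 1 := by rwa [norm_neg]
    have hu : IsUnit ((1 : E →L[ℝ] E) + s • L) := by
      have h2 := (Units.oneSub (-(s • L)) hn).isUnit
      have h3 : ((Units.oneSub (-(s • L)) hn : (E →L[ℝ] E)ˣ) : E →L[ℝ] E)
          = 1 + s • L := by
        show 1 - -(s • L) = 1 + s • L
        rw [sub_neg_eq_add]
      rwa [h3] at h2
    have hu' : IsUnit ((1 + s • L : E →L[ℝ] E) : E →ₗ[ℝ] E) :=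
      hu.map (ContinuousLinearMap.toLinearMapRingHom (R₁ := ℝ) (M₁ := E))
    exact isUnit_iff_ne_zero.mp (LinearMap.isUnit_det _ hu')
  have hcont : Continuous fun s : ℝ => ContinuousLinearMap.det (1 + s • L) :=
    ContinuousLinearMap.continuous_det.comp (by continuity)
  by_contra hle
  push_neg at hle
  have h1 : (fun s : ℝ => ContinuousLinearMap.det (1 + s • L)) 1 ≤ 0 := by
    simpa using hle
  have h0 : (fun s : ℝ => ContinuousLinearMap.det (1 + s • L)) 0 = 1 := by
    simp only [zero_smul, add_zero]
    show LinearMap.det ((1 : E →L[ℝ] E) : E →ₗ[ℝ] E) = 1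
    rw [show ((1 : E →L[ℝ] E) : E →ₗ[ℝ] E) = LinearMap.id from rfl, LinearMap.det_id]
  have key := intermediate_value_Icc' (by norm_num : (0:ℝ) ≤ 1) hcont.continuousOn
  have : (0:ℝ) ∈ Set.Icc ((fun s : ℝ => ContinuousLinearMap.det (1 + s • L)) 1)
      ((fun s : ℝ => ContinuousLinearMap.det (1 + s • L)) 0) := ⟨h1, by rw [h0]; norm_num⟩
  obtain ⟨s, hs, hs0⟩ := key this
  exact hne s hs hs0

theorem no_smooth_retraction {E : Type*} [NormedAddCommGroup E] [InnerProductSpace ℝ E]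
    [FiniteDimensional ℝ E] [MeasurableSpace E] [BorelSpace E]
    (μ : Measure E) [μ.IsAddHaarMeasure]
    {r : E → E} {U : Set E} (hU : IsOpen U)
    (hDU : closedBall 0 1 ⊆ U) (hr : ContDiffOn ℝ (⊤:ℕ∞) r U)
    (hnorm : ∀ x ∈ U, ‖r x‖ = 1)
    (hid : ∀ x ∈ closedBall (0 : E) 1, ‖x‖ = 1 → r x = x) : False := by
  set m : ℕ := Module.finrank ℝ E with hmdef
  set D : Set E := closedBall 0 1 with hDdef
  have hDc : IsCompact D := isCompact_closedBall _ _
  have hDm : MeasurableSet D := measurableSet_closedBall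
  have hDconv : Convex ℝ D := convex_closedBall _ _
  set g : E → E := fun x => r x - id x with hgdef
  have hg : ContDiffOn ℝ (⊤:ℕ∞) g U := hr.sub contDiffOn_id
  set G : E → E →L[ℝ] E := fun x => fderiv ℝ g x with hGdef
  have hGd : ∀ x ∈ U, HasFDerivAt g (G x) x := by
    intro x hx
    exact ((hg.contDiffAt (hU.mem_nhds hx)).differentiableAt (by simp)).hasFDerivAt
  have hGc : ContinuousOn G U := hg.continuousOn_fderiv_of_isOpen hU (by exact_mod_cast (le_top : (1:ℕ∞) ≤ ⊤))
  obtain ⟨C0, hC0⟩ := hDc.exists_bound_of_continuousOn (hGc.mono hDU)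
  set C : ℝ := max C0 0 with hCdef
  have hC : ∀ x ∈ D, ‖G x‖ ≤ C := fun x hx => (hC0 x hx).trans (le_max_left _ _)
  have hCnn : (0:ℝ) ≤ C := le_max_right _ _
  set t₀ : ℝ := min (2*(C+1))⁻¹ 2⁻¹ with ht₀def
  have ht₀pos : 0 < t₀ := lt_min (by positivity) (by norm_num)
  have ht₀ : ∀ t ∈ Icc (0:ℝ) t₀, t * C ≤ 1/2 ∧ t ≤ 1/2 := by
    intro t ht
    constructor
    · have h1 : t ≤ (2*(C+1))⁻¹ := ht.2.trans (min_le_left _ _)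
      have h2 : t * C ≤ (2*(C+1))⁻¹ * C := mul_le_mul_of_nonneg_right h1 hCnn
      refine h2.trans ?_
      rw [inv_mul_eq_div, div_le_iff₀ (by positivity)]
      nlinarith
    · have := ht.2.trans (min_le_right _ _)
      linarith
  -- matrices
  set b := Module.finBasis ℝ E with hbdef
  set M : E → Matrix (Fin m) (Fin m) ℝ := fun x => LinearMap.toMatrix b b (G x) with hMdef
  have bridge : ∀ (x : E) (t : ℝ),
      ((1 : Matrix (Fin m) (Fin m) ℝ) + t • M x).det
        = ContinuousLinearMap.det ((1 : E →L[ℝ] E) + t • G x) := by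
    intro x t
    show _ = LinearMap.det (((1 : E →L[ℝ] E) + t • G x : E →L[ℝ] E) : E →ₗ[ℝ] E)
    rw [← LinearMap.det_toMatrix b]
    congr 1
    have h2 : (((1 : E →L[ℝ] E) + t • G x : E →L[ℝ] E) : E →ₗ[ℝ] E)
        = (LinearMap.id : E →ₗ[ℝ] E) + t • ((G x : E →ₗ[ℝ] E)) := rfl
    rw [h2, map_add, _root_.map_smul, LinearMap.toMatrix_id]
  have hMc : ContinuousOn M D := by
    have h3 : Continuous fun L : E →L[ℝ] E => LinearMap.toMatrix b b (L : E →ₗ[ℝ] E) :=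
      LinearMap.continuous_of_finiteDimensional
        ((LinearMap.toMatrix b b).toLinearMap.comp (ContinuousLinearMap.coeLM ℝ))
    exact h3.comp_continuousOn (hGc.mono hDU)
  -- the maps f_t
  set F : ℝ → E → E := fun t y => y + t • g y with hFdef
  set Dt : ℝ → E → E →L[ℝ] E := fun t x => (1 : E →L[ℝ] E) + t • G x with hDtdef
  have hDt : ∀ (t : ℝ), ∀ x ∈ U, HasFDerivAt (F t) (Dt t x) x := by
    intro t x hx
    exact (hasFDerivAt_id x).add ((hGd x hx).const_smul t)
  have hdetpos : ∀ t ∈ Icc (0:ℝ) t₀, ∀ x ∈ D, 0 < (Dt t x).det := by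
    intro t ht x hx
    apply det_one_add_pos
    rw [norm_smul t (G x), Real.norm_eq_abs, abs_of_nonneg ht.1]
    calc t * ‖G x‖ ≤ t * C := mul_le_mul_of_nonneg_left (hC x hx) ht.1
      _ ≤ 1/2 := (ht₀ t ht).1
      _ < 1 := by norm_num
  have hlip : ∀ x ∈ D, ∀ y ∈ D, ‖g y - g x‖ ≤ C * ‖y - x‖ := by
    intro x hx y hy
    exact hDconv.norm_image_sub_le_of_norm_hasFDerivWithin_le
      (fun z hz => (hGd z (hDU hz)).hasFDerivWithinAt) hC hx hy
  have hinj : ∀ t ∈ Icc (0:ℝ) t₀, Set.InjOn (F t) D := by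
    intro t ht x hx y hy hxy
    have h1 : x - y = t • g y - t • g x := by
      rw [sub_eq_sub_iff_add_eq_add]
      have h0 : x + t • g x = y + t • g y := hxy
      rw [h0]; abel
    have h2 : ‖x - y‖ ≤ 1/2 * ‖x - y‖ := by
      calc ‖x - y‖ = t * ‖g y - g x‖ := by
            rw [h1, ← smul_sub, norm_smul, Real.norm_eq_abs, abs_of_nonneg ht.1]
        _ ≤ t * (C * ‖y - x‖) := mul_le_mul_of_nonneg_left (hlip x hx y hy) ht.1
        _ = (t * C) * ‖y - x‖ := by ring
        _ ≤ 1/2 * ‖y - x‖ := mul_le_mul_of_nonneg_right (ht₀ t ht).1 (norm_nonneg _)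
        _ = 1/2 * ‖x - y‖ := by rw [norm_sub_rev]
    have h3 : ‖x - y‖ ≤ 0 := by linarith
    have h4 := le_antisymm h3 (norm_nonneg _)
    rwa [norm_sub_eq_zero_iff] at h4
  have hFr : ∀ x ∈ U, F 1 x = r x := by
    intro x hx
    show x + (1:ℝ) • (r x - id x) = r x
    simp
  have hFconv : ∀ (t : ℝ), ∀ x : E, F t x = (1-t) • x + t • r x := by
    intro t x
    show x + t • (r x - id x) = (1-t) • x + t • r x
    rw [smul_sub, sub_smul, one_smul]
    show x + (t • r x - t • x) = x - t • x + t • r x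
    abel
  have himgsub : ∀ t ∈ Icc (0:ℝ) t₀, F t '' D ⊆ D := by
    intro t ht y hy
    obtain ⟨x, hx, rfl⟩ := hy
    rw [hDdef, mem_closedBall_zero_iff, hFconv t x]
    have h1 : ‖x‖ ≤ 1 := by rwa [hDdef, mem_closedBall_zero_iff] at hx
    have h2 : ‖r x‖ = 1 := hnorm x (hDU hx)
    have ht1 : t ≤ 1 := (ht₀ t ht).2.trans (by norm_num)
    calc ‖(1-t) • x + t • r x‖ ≤ ‖(1-t) • x‖ + ‖t • r x‖ := norm_add_le _ _
      _ = (1-t) * ‖x‖ + t * ‖r x‖ := by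
          rw [norm_smul, norm_smul, Real.norm_eq_abs, Real.norm_eq_abs,
            abs_of_nonneg (by linarith : (0:ℝ) ≤ 1 - t), abs_of_nonneg ht.1]
      _ ≤ (1-t) * 1 + t * 1 := by
          apply add_le_add
          · exact mul_le_mul_of_nonneg_left h1 (by linarith)
          · rw [h2]
      _ = 1 := by ring
  have hFcont : ∀ (t : ℝ), ContinuousOn (F t) D := by
    intro t
    exact (continuousOn_id.add (((hg.continuousOn.mono hDU)).const_smul t))
  have hSfix : ∀ t ∈ Icc (0:ℝ) t₀, ∀ x ∈ D, ‖x‖ = 1 → F t x = x := by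
    intro t ht x hx hx1
    rw [hFconv t x, hid x hx hx1]
    rw [sub_smul, one_smul]
    abel
  have himage : ∀ t ∈ Icc (0:ℝ) t₀, F t '' D = D := by
    intro t ht
    refine subset_antisymm (himgsub t ht) ?_
    -- openness of the image of the open ball
    have hopen : IsOpen (F t '' ball 0 1) := by
      rw [isOpen_iff_mem_nhds]
      rintro y ⟨x, hx, rfl⟩
      have hxD : x ∈ D := ball_subset_closedBall hx
      have hxU : x ∈ U := hDU hxD
      have hcd : ContDiffAt ℝ (⊤:ℕ∞) (F t) x := by
        exact contDiffAt_id.add ((hg.contDiffAt (hU.mem_nhds hxU)).const_smul t)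
      have hstrict : HasStrictFDerivAt (F t) (fderiv ℝ (F t) x) x :=
        hcd.hasStrictFDerivAt (by simp)
      have hfd : fderiv ℝ (F t) x = Dt t x := (hDt t x hxU).fderiv
      rw [hfd] at hstrict
      -- build the equivalence
      have hdet : ContinuousLinearMap.det (Dt t x) ≠ 0 := (hdetpos t ht x hxD).ne'
      have hdet' : IsUnit (LinearMap.toMatrix b b ((Dt t x : E →L[ℝ] E) : E →ₗ[ℝ] E)).det := by
        rw [LinearMap.det_toMatrix]
        exact isUnit_iff_ne_zero.mpr hdet
      set e := LinearEquiv.ofIsUnitDet hdet' with hedef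
      have hecoe : (e.toContinuousLinearEquiv : E →L[ℝ] E) = Dt t x := by
        apply ContinuousLinearMap.coe_injective
        exact LinearEquiv.coe_ofIsUnitDet hdet'
      rw [← hecoe] at hstrict
      have hmap := hstrict.map_nhds_eq_of_equiv
      rw [← hmap]
      exact Filter.image_mem_map (isOpen_ball.mem_nhds hx)
    -- the connectedness argument
    have hBW : ball (0:E) 1 ∩ F t '' D ⊆ F t '' ball 0 1 := by
      rintro y ⟨hyB, x, hxD, rfl⟩
      refine ⟨x, ?_, rfl⟩
      have hx1 : ‖x‖ ≤ 1 := by rwa [hDdef, mem_closedBall_zero_iff] at hxD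
      rcases lt_or_eq_of_le hx1 with h | h
      · rwa [mem_ball_zero_iff]
      · exfalso
        have := hSfix t ht x hxD h
        rw [this] at hyB
        rw [mem_ball_zero_iff, h] at hyB
        exact lt_irrefl 1 hyB
    have hzero : F t 0 ∈ ball (0:E) 1 ∩ F t '' ball 0 1 := by
      have h0D : (0:E) ∈ ball (0:E) 1 := mem_ball_self one_pos
      refine ⟨?_, ⟨0, h0D, rfl⟩⟩
      rw [mem_ball_zero_iff, hFconv t 0, smul_zero, zero_add, norm_smul,
        Real.norm_eq_abs, abs_of_nonneg ht.1, hnorm 0 (hDU (mem_closedBall_self zero_le_one)),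
        mul_one]
      exact lt_of_le_of_lt (ht₀ t ht).2 (by norm_num)
    have hball : ball (0:E) 1 ⊆ F t '' D := by
      by_contra hcon
      rw [Set.not_subset] at hcon
      obtain ⟨y0, hy0B, hy0W⟩ := hcon
      have hpre : IsPreconnected (ball (0:E) 1) := (convex_ball 0 1).isPreconnected
      have hVopen : IsOpen ((F t '' D)ᶜ) :=
        (hDc.image_of_continuousOn (hFcont t)).isClosed.isOpen_compl
      have hcover : ball (0:E) 1 ⊆ F t '' ball 0 1 ∪ (F t '' D)ᶜ := by
        intro y hy
        by_cases hyW : y ∈ F t '' D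
        · exact Or.inl (hBW ⟨hy, hyW⟩)
        · exact Or.inr hyW
      have h1 : (ball (0:E) 1 ∩ F t '' ball 0 1).Nonempty := ⟨F t 0, hzero⟩
      have h2 : (ball (0:E) 1 ∩ (F t '' D)ᶜ).Nonempty := ⟨y0, hy0B, hy0W⟩
      obtain ⟨z, hzB, hz1, hz2⟩ := hpre _ _ hopen hVopen hcover h1 h2
      exact hz2 (image_mono ball_subset_closedBall hz1)
    calc D = closure (ball (0:E) 1) := (closure_ball 0 one_ne_zero).symm
      _ ⊆ closure (F t '' D) := closure_mono hball
      _ = F t '' D := (hDc.image_of_continuousOn (hFcont t)).isClosed.closure_eq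
  -- change of variables
  set a : ℝ := (μ D).toReal with hadef
  have hapos : 0 < a := by
    rw [hadef]
    apply ENNReal.toReal_pos
    · exact (measure_closedBall_pos μ 0 one_pos).ne'
    · exact hDc.measure_lt_top.ne
  set φ : ℝ → ℝ := fun t => ∫ x in D, ((1 : Matrix (Fin m) (Fin m) ℝ) + t • M x).det ∂μ
    with hφdef
  have hIntOn : ∀ t : ℝ, IntegrableOn
      (fun x => ((1 : Matrix (Fin m) (Fin m) ℝ) + t • M x).det) D μ := by
    intro t
    apply ContinuousOn.integrableOn_compact hDc
    exact (Continuous.matrix_det continuous_id).comp_continuousOn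
      (continuousOn_const.add (hMc.const_smul t))
  have hφeq : ∀ t ∈ Icc (0:ℝ) t₀, φ t = a := by
    intro t ht
    have hcv := integral_image_eq_integral_abs_det_fderiv_smul μ hDm
      (fun x hx => ((hDt t x (hDU hx)).hasFDerivWithinAt)) (hinj t ht)
      (fun _ => (1:ℝ))
    rw [himage t ht] at hcv
    rw [setIntegral_const] at hcv
    have h2 : ∀ x ∈ D, |(Dt t x).det| • (1:ℝ)
        = ((1 : Matrix (Fin m) (Fin m) ℝ) + t • M x).det := by
      intro x hx
      rw [smul_eq_mul, mul_one, abs_of_pos (hdetpos t ht x hx), bridge]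
    rw [setIntegral_congr_fun hDm h2] at hcv
    show (∫ x in D, ((1 : Matrix (Fin m) (Fin m) ℝ) + t • M x).det ∂μ) = a
    rw [← hcv, smul_eq_mul, mul_one]
    rfl
  -- Lagrange interpolation
  set v : Fin (m+1) → ℝ := fun j => t₀ * (j+1) / (m+1) with hvdef
  have hvmem : ∀ j, v j ∈ Icc (0:ℝ) t₀ := by
    intro j
    constructor
    · apply div_nonneg (mul_nonneg ht₀pos.le (by positivity)) (by positivity)
    · rw [hvdef]
      rw [div_le_iff₀ (by positivity)]
      have h1 : (j:ℝ) + 1 ≤ (m:ℝ) + 1 := by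
        have := j.isLt
        have : (j:ℝ) ≤ (m:ℝ) := by exact_mod_cast Nat.lt_succ_iff.mp j.isLt
        linarith
      nlinarith
  have hvinj : Set.InjOn v (Finset.univ : Finset (Fin (m+1))) := by
    intro i _ j _ hij
    replace hij : t₀ * (((i:ℕ):ℝ)+1) / (m+1) = t₀ * (((j:ℕ):ℝ)+1) / (m+1) := hij
    rw [div_left_inj' (by positivity), mul_eq_mul_left_iff, add_left_inj] at hij
    rcases hij with h | h
    · have : (i:ℕ) = (j:ℕ) := by exact_mod_cast h
      exact Fin.ext this
    · exact absurd h ht₀pos.ne'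
  set ℓ : ℝ → Fin (m+1) → ℝ := fun t j => (Lagrange.basis Finset.univ v j).eval t with hℓdef
  have hinterp : ∀ p : ℝ[X], p.degree < (m+1 : ℕ) → ∀ t : ℝ,
      p.eval t = ∑ j : Fin (m+1), p.eval (v j) * ℓ t j := by
    intro p hp t
    have hcard : (Finset.univ : Finset (Fin (m+1))).card = m + 1 := by
      rw [Finset.card_univ, Fintype.card_fin]
    have h1 := Lagrange.eq_interpolate hvinj (by rwa [hcard])
    conv_lhs => rw [h1]
    rw [Lagrange.interpolate_apply, Polynomial.eval_finset_sum]
    refine Finset.sum_congr rfl fun j _ => ?_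
    rw [Polynomial.eval_mul, Polynomial.eval_C]
  have hφpoly : ∀ t : ℝ, φ t = ∑ j : Fin (m+1), ℓ t j * φ (v j) := by
    intro t
    have h1 : ∀ x ∈ D, ((1 : Matrix (Fin m) (Fin m) ℝ) + t • M x).det
        = ∑ j : Fin (m+1), (((1 : Matrix (Fin m) (Fin m) ℝ) + (v j) • M x).det) * ℓ t j := by
      intro x hx
      rw [← eval_detPoly]
      rw [hinterp (detPoly (M x)) (degree_detPoly_lt (M x)) t]
      refine Finset.sum_congr rfl fun j _ => ?_
      rw [eval_detPoly]
    calc φ t = ∫ x in D, ∑ j : Fin (m+1),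
          (((1 : Matrix (Fin m) (Fin m) ℝ) + (v j) • M x).det) * ℓ t j ∂μ := by
          show (∫ x in D, ((1 : Matrix (Fin m) (Fin m) ℝ) + t • M x).det ∂μ) = _
          exact setIntegral_congr_fun hDm h1
      _ = ∑ j : Fin (m+1), ∫ x in D,
          (((1 : Matrix (Fin m) (Fin m) ℝ) + (v j) • M x).det) * ℓ t j ∂μ := by
          apply integral_finset_sum
          intro j _
          exact (hIntOn (v j)).mul_const _
      _ = ∑ j : Fin (m+1), ℓ t j * φ (v j) := by
          refine Finset.sum_congr rfl fun j _ => ?_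
          rw [integral_mul_const]
          ring
  have hsumℓ : ∀ t : ℝ, ∑ j : Fin (m+1), ℓ t j = 1 := by
    intro t
    have h1 := hinterp (Polynomial.C 1)
      (lt_of_le_of_lt Polynomial.degree_C_le (by exact_mod_cast Nat.succ_pos m)) t
    simp only [Polynomial.eval_C, one_mul] at h1
    exact h1.symm
  have hφconst : ∀ t : ℝ, φ t = a := by
    intro t
    rw [hφpoly t]
    have h1 : ∀ j : Fin (m+1), φ (v j) = a := fun j => hφeq (v j) (hvmem j)
    calc ∑ j : Fin (m+1), ℓ t j * φ (v j) = ∑ j : Fin (m+1), ℓ t j * a := by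
          refine Finset.sum_congr rfl fun j _ => by rw [h1 j]
      _ = (∑ j : Fin (m+1), ℓ t j) * a := by rw [Finset.sum_mul]
      _ = a := by rw [hsumℓ t, one_mul]
  -- the determinant of the derivative of r is zero
  have hdet1 : ∀ x ∈ D, ((1 : Matrix (Fin m) (Fin m) ℝ) + (1:ℝ) • M x).det = 0 := by
    intro x hx
    have hxU : x ∈ U := hDU hx
    rw [bridge x 1]
    by_contra hne
    have hu : IsUnit (LinearMap.toMatrix b b ((Dt 1 x : E →L[ℝ] E) : E →ₗ[ℝ] E)).det := by
      rw [LinearMap.det_toMatrix]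
      exact isUnit_iff_ne_zero.mpr hne
    have hrd : HasFDerivAt r (Dt 1 x) x := by
      have h0 := hDt 1 x hxU
      have hF1 : F 1 = r := by
        funext y
        show y + (1:ℝ) • (r y - id y) = r y
        simp
      rwa [hF1] at h0
    have hip : HasFDerivAt (fun y => ⟪r y, r y⟫)
        ((fderivInnerCLM ℝ (r x, r x)).comp ((Dt 1 x).prod (Dt 1 x))) x :=
      HasFDerivAt.inner ℝ hrd hrd
    have hconst : HasFDerivAt (fun y => ⟪r y, r y⟫) (0 : E →L[ℝ] ℝ) x := by
      have heq : (fun y => ⟪r y, r y⟫) =ᶠ[nhds x] fun _ => (1:ℝ) := by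
        filter_upwards [hU.mem_nhds hxU] with y hy
        rw [real_inner_self_eq_norm_sq, hnorm y hy, one_pow]
      exact (hasFDerivAt_const (1:ℝ) x).congr_of_eventuallyEq heq
    have hzero : ((fderivInnerCLM ℝ (r x, r x)).comp ((Dt 1 x).prod (Dt 1 x)))
        = (0 : E →L[ℝ] ℝ) := hip.unique hconst
    obtain ⟨w, hw⟩ := (LinearEquiv.ofIsUnitDet hu).surjective (r x)
    have hwe : (Dt 1 x) w = r x := by
      rw [← hw]
      rfl
    have h6 := congrArg (fun L : E →L[ℝ] ℝ => L w) hzero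
    simp only [ContinuousLinearMap.comp_apply, ContinuousLinearMap.prod_apply,
      ContinuousLinearMap.zero_apply, fderivInnerCLM_apply, hwe] at h6
    rw [real_inner_self_eq_norm_sq, hnorm x hxU, one_pow] at h6
    norm_num at h6
  have hφ1 : φ 1 = 0 := by
    show (∫ x in D, ((1 : Matrix (Fin m) (Fin m) ℝ) + (1:ℝ) • M x).det ∂μ) = 0
    rw [setIntegral_congr_fun hDm hdet1]
    simp
  rw [hφconst 1] at hφ1
  exact absurd hφ1 hapos.ne'

theorem no_smooth_fpfree {E : Type*} [NormedAddCommGroup E] [InnerProductSpace ℝ E]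
    [FiniteDimensional ℝ E] [MeasurableSpace E] [BorelSpace E]
    (μ : Measure E) [μ.IsAddHaarMeasure]
    {q : E → E} (hq : ContDiff ℝ (⊤:ℕ∞) q)
    (hbd : ∀ x ∈ closedBall (0 : E) 1, ‖q x‖ ≤ 1)
    (hfix : ∀ x ∈ closedBall (0 : E) 1, q x ≠ x) : False := by
  set D : Set E := closedBall 0 1 with hDdef
  set w : E → E := fun x => x - q x with hwdef
  have hwc : ContDiff ℝ (⊤:ℕ∞) w := contDiff_id.sub hq
  set u : E → E := fun x => ‖w x‖⁻¹ • w x with hudef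
  set bf : E → ℝ := fun x => ⟪x, u x⟫ with hbdef
  set d : E → ℝ := fun x => 1 - ⟪x, x⟫ + bf x ^ 2 with hddef
  set τ : E → ℝ := fun x => -bf x + Real.sqrt (d x) with hτdef
  set r : E → E := fun x => x + τ x • u x with hrdef
  set V : Set E := {x | w x ≠ 0} with hVdef
  have hVopen : IsOpen V := by
    have : V = w ⁻¹' ({0}ᶜ) := rfl
    rw [this]
    exact (isOpen_compl_singleton).preimage hwc.continuous
  -- smoothness facts at points of V
  have hsmooth : ∀ x ∈ V, ContDiffAt ℝ (⊤:ℕ∞) u x ∧ ContDiffAt ℝ (⊤:ℕ∞) bf x ∧ ContDiffAt ℝ (⊤:ℕ∞) d x := by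
    intro x hx
    have hwx : w x ≠ 0 := hx
    have hw' : ContDiffAt ℝ (⊤:ℕ∞) w x := hwc.contDiffAt
    have hn : ContDiffAt ℝ (⊤:ℕ∞) (fun y => ‖w y‖) x := ContDiffAt.norm ℝ hw' hwx
    have hninv : ContDiffAt ℝ (⊤:ℕ∞) (fun y => ‖w y‖⁻¹) x :=
      hn.inv (norm_ne_zero_iff.mpr hwx)
    have hu : ContDiffAt ℝ (⊤:ℕ∞) u x := hninv.smul hw'
    have hb : ContDiffAt ℝ (⊤:ℕ∞) bf x := ContDiffAt.inner ℝ contDiffAt_id hu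
    refine ⟨hu, hb, ?_⟩
    exact (contDiffAt_const.sub (ContDiffAt.inner ℝ contDiffAt_id contDiffAt_id)).add (hb.pow 2)
  have hdV : ContinuousOn d V := fun x hx => ((hsmooth x hx).2.2.continuousAt).continuousWithinAt
  set U : Set E := V ∩ d ⁻¹' (Ioi 0) with hUdef
  have hUopen : IsOpen U := hdV.isOpen_inter_preimage hVopen isOpen_Ioi
  -- unit vector facts
  have hunorm : ∀ x ∈ V, ‖u x‖ = 1 := by
    intro x hx
    have hwx : w x ≠ 0 := hx
    rw [hudef]
    show ‖‖w x‖⁻¹ • w x‖ = 1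
    rw [norm_smul, Real.norm_eq_abs, abs_of_nonneg (by positivity)]
    exact inv_mul_cancel₀ (norm_ne_zero_iff.mpr hwx)
  -- boundary positivity of bf
  have hkey : ∀ x, ‖x‖ = 1 → ‖q x‖ ≤ 1 → w x ≠ 0 → 0 < bf x := by
    intro x hx1 hqx hwx
    have h1 : ⟪x, w x⟫ = ‖x‖^2 - ⟪x, q x⟫ := by
      show ⟪x, x - q x⟫ = _
      rw [inner_sub_right, real_inner_self_eq_norm_sq]
    have h2 : ‖w x‖^2 = ‖x‖^2 - 2 * ⟪x, q x⟫ + ‖q x‖^2 := norm_sub_sq_real x (q x)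
    have h3 : 0 < ‖w x‖ := norm_pos_iff.mpr hwx
    have h4 : 0 < ⟪x, w x⟫ := by
      have h6 : ‖q x‖^2 ≤ 1 := by nlinarith [norm_nonneg (q x)]
      have h7 : 0 < ‖w x‖^2 := by positivity
      rw [h1, hx1]
      rw [hx1] at h2
      nlinarith [h2, h6, h7]
    have h5 : bf x = ‖w x‖⁻¹ * ⟪x, w x⟫ := by
      show ⟪x, ‖w x‖⁻¹ • w x⟫ = _
      rw [real_inner_smul_right]
    rw [h5]
    positivity
  have hDU : D ⊆ U := by
    intro x hx
    have hx1 : ‖x‖ ≤ 1 := by rwa [hDdef, mem_closedBall_zero_iff] at hx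
    have hwx : w x ≠ 0 := sub_ne_zero.mpr (Ne.symm (hfix x hx))
    refine ⟨hwx, ?_⟩
    show 0 < d x
    rcases lt_or_eq_of_le hx1 with h | h
    · have : ⟪x, x⟫ < 1 := by
        rw [real_inner_self_eq_norm_sq]
        nlinarith [norm_nonneg x]
      have : 0 ≤ bf x ^ 2 := sq_nonneg _
      show 0 < 1 - ⟪x, x⟫ + bf x ^ 2
      linarith
    · have hb := hkey x h (hbd x hx) hwx
      show 0 < 1 - ⟪x, x⟫ + bf x ^ 2
      rw [real_inner_self_eq_norm_sq, ← h]
      nlinarith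
  -- smoothness of r on U
  have hrsmooth : ContDiffOn ℝ (⊤:ℕ∞) r U := by
    intro x hx
    obtain ⟨hu, hb, hd⟩ := hsmooth x hx.1
    have hdx : (0:ℝ) < d x := hx.2
    have hs : ContDiffAt ℝ (⊤:ℕ∞) (fun y => Real.sqrt (d y)) x := hd.sqrt hdx.ne'
    have hτ' : ContDiffAt ℝ (⊤:ℕ∞) τ x := (hb.neg).add hs
    have : ContDiffAt ℝ (⊤:ℕ∞) r x := contDiffAt_id.add (hτ'.smul hu)
    exact this.contDiffWithinAt
  -- norm one on U
  have hrnorm : ∀ x ∈ U, ‖r x‖ = 1 := by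
    intro x hx
    have hdx : (0:ℝ) < d x := hx.2
    have huu : ⟪u x, u x⟫ = 1 := by
      rw [real_inner_self_eq_norm_sq, hunorm x hx.1, one_pow]
    have hsq : Real.sqrt (d x) ^ 2 = d x := Real.sq_sqrt hdx.le
    have hinner : ⟪r x, r x⟫ = 1 := by
      have expand : ∀ (y z : E) (c : ℝ), ⟪y + c • z, y + c • z⟫
          = ⟪y, y⟫ + 2 * (c * ⟪y, z⟫) + c * (c * ⟪z, z⟫) := by
        intro y z c
        rw [real_inner_add_add_self, real_inner_smul_left]
        rw [real_inner_smul_right, real_inner_smul_right]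
      show ⟪x + τ x • u x, x + τ x • u x⟫ = 1
      rw [expand x (u x) (τ x), huu]
      have hbfx : ⟪x, u x⟫ = bf x := rfl
      rw [hbfx]
      have hdd : d x = 1 - ⟪x, x⟫ + bf x ^ 2 := rfl
      have hsq' : Real.sqrt (d x) ^ 2 = 1 - ⟪x, x⟫ + bf x ^ 2 := hsq.trans hdd
      have hττ : τ x = -bf x + Real.sqrt (d x) := rfl
      rw [hττ]
      linear_combination hsq'
    have h2 : ‖r x‖^2 = 1 := by rwa [real_inner_self_eq_norm_sq] at hinner
    have h3 : (‖r x‖ - 1) * (‖r x‖ + 1) = 0 := by nlinarith [h2]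
    rcases mul_eq_zero.mp h3 with h4 | h4
    · linarith
    · linarith [norm_nonneg (r x)]
  -- identity on the boundary sphere
  have hrid : ∀ x ∈ D, ‖x‖ = 1 → r x = x := by
    intro x hx hx1
    have hwx : w x ≠ 0 := sub_ne_zero.mpr (Ne.symm (hfix x hx))
    have hb := hkey x hx1 (hbd x hx) hwx
    have hdx : d x = bf x ^ 2 := by
      show 1 - ⟪x, x⟫ + bf x ^ 2 = bf x ^ 2
      rw [real_inner_self_eq_norm_sq, hx1]
      ring
    have hτx : τ x = 0 := by
      show -bf x + Real.sqrt (d x) = 0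
      rw [hdx, Real.sqrt_sq hb.le]
      ring
    show x + τ x • u x = x
    rw [hτx, zero_smul, add_zero]
  exact no_smooth_retraction μ hUopen hDU hrsmooth hrnorm hrid

theorem brouwer_fixed_point (n : ℕ)
    (f : EuclideanSpace ℝ (Fin n) → EuclideanSpace ℝ (Fin n))
    (hf : ContinuousOn f (Metric.closedBall 0 1))
    (hmaps : Set.MapsTo f (Metric.closedBall 0 1) (Metric.closedBall 0 1)) :
    ∃ x ∈ Metric.closedBall (0 : EuclideanSpace ℝ (Fin n)) 1, f x = x := by
  by_contra hcon
  push_neg at hcon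
  set D : Set (EuclideanSpace ℝ (Fin n)) := Metric.closedBall 0 1 with hDdef
  have hDc : IsCompact D := isCompact_closedBall _ _
  have hDne : D.Nonempty := ⟨0, mem_closedBall_self zero_le_one⟩
  -- minimum of ‖f x - x‖
  have hcont2 : ContinuousOn (fun x => ‖f x - x‖) D := (hf.sub continuousOn_id).norm
  obtain ⟨x₀, hx₀D, hx₀min⟩ := hDc.exists_isMinOn hDne hcont2
  set ε : ℝ := ‖f x₀ - x₀‖ with hεdef
  have hεpos : 0 < ε := by
    rw [hεdef, norm_pos_iff, sub_ne_zero]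
    exact hcon x₀ hx₀D
  have hmin : ∀ x ∈ D, ε ≤ ‖f x - x‖ := fun x hx => hx₀min hx
  -- retraction onto the ball
  set proj : EuclideanSpace ℝ (Fin n) → EuclideanSpace ℝ (Fin n) :=
    fun x => (max 1 ‖x‖)⁻¹ • x with hprojdef
  have hmaxpos : ∀ x : EuclideanSpace ℝ (Fin n), (0:ℝ) < max 1 ‖x‖ :=
    fun x => lt_max_of_lt_left one_pos
  have hproj_cont : Continuous proj := by
    apply Continuous.fun_smul
    · exact (continuous_const.max continuous_norm).inv₀ (fun x => (hmaxpos x).ne')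
    · exact continuous_id
  have hproj_mem : ∀ x, proj x ∈ D := by
    intro x
    rw [hDdef, mem_closedBall_zero_iff, hprojdef]
    show ‖(max 1 ‖x‖)⁻¹ • x‖ ≤ 1
    rw [norm_smul, Real.norm_eq_abs, abs_of_pos (inv_pos.mpr (hmaxpos x))]
    rw [inv_mul_le_iff₀ (hmaxpos x), mul_one]
    exact le_max_right _ _
  have hproj_id : ∀ x ∈ D, proj x = x := by
    intro x hx
    rw [hDdef, mem_closedBall_zero_iff] at hx
    show (max 1 ‖x‖)⁻¹ • x = x
    rw [max_eq_left hx, inv_one, one_smul]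
  set F : EuclideanSpace ℝ (Fin n) → EuclideanSpace ℝ (Fin n) := f ∘ proj with hFdef
  have hFcont : Continuous F := hf.comp_continuous hproj_cont hproj_mem
  have hFD : ∀ x ∈ D, F x = f x := by
    intro x hx
    show f (proj x) = f x
    rw [hproj_id x hx]
  have hFbd : ∀ x, ‖F x‖ ≤ 1 := by
    intro x
    have := hmaps (hproj_mem x)
    rwa [hDdef, mem_closedBall_zero_iff] at this
  -- uniform continuity on a big ball
  have hUC : UniformContinuousOn F (closedBall 0 2) :=
    (isCompact_closedBall (0: EuclideanSpace ℝ (Fin n)) 2).uniformContinuousOn_of_continuous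
      hFcont.continuousOn
  rw [Metric.uniformContinuousOn_iff] at hUC
  obtain ⟨δ, hδpos, hδ⟩ := hUC (ε/3) (by positivity)
  set δ' : ℝ := min δ 1 with hδ'def
  have hδ'pos : 0 < δ' := lt_min hδpos one_pos
  -- bump function convolution
  set φ : ContDiffBump (0 : EuclideanSpace ℝ (Fin n)) :=
    ⟨δ'/2, δ', by positivity, half_lt_self hδ'pos⟩ with hφdef
  set q0 : EuclideanSpace ℝ (Fin n) → EuclideanSpace ℝ (Fin n) :=
    (φ.normed volume) ⋆[ContinuousLinearMap.lsmul ℝ ℝ, volume] F with hq0def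
  have hq0smooth : ContDiff ℝ (⊤:ℕ∞) q0 :=
    HasCompactSupport.contDiff_convolution_left _ φ.hasCompactSupport_normed
      φ.contDiff_normed hFcont.locallyIntegrable
  have hq0close : ∀ x ∈ D, dist (q0 x) (F x) ≤ ε/3 := by
    intro x hx
    apply ContDiffBump.dist_normed_convolution_le hFcont.aestronglyMeasurable
    intro y hy
    have hxball : x ∈ closedBall (0: EuclideanSpace ℝ (Fin n)) 2 := by
      rw [mem_closedBall_zero_iff]
      rw [hDdef, mem_closedBall_zero_iff] at hx
      linarith
    have hyball : y ∈ closedBall (0: EuclideanSpace ℝ (Fin n)) 2 := by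
      rw [mem_ball] at hy
      rw [mem_closedBall_zero_iff]
      rw [hDdef, mem_closedBall_zero_iff] at hx
      have h1 : dist y 0 ≤ dist y x + dist x 0 := dist_triangle _ _ _
      rw [dist_zero_right, dist_zero_right] at h1
      have h3 : φ.rOut = δ' := rfl
      rw [h3] at hy
      have h4 : δ' ≤ 1 := min_le_right _ _
      linarith [hy.le, h1]
    have hdyx : dist y x < δ := by
      rw [mem_ball] at hy
      have h3 : φ.rOut = δ' := rfl
      rw [h3] at hy
      exact hy.trans_le (min_le_left _ _)
    exact (hδ y hyball x hxball hdyx).le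
  -- rescale
  set c : ℝ := (1 + ε/3)⁻¹ with hcdef
  have hcpos : 0 < c := by rw [hcdef]; positivity
  set q : EuclideanSpace ℝ (Fin n) → EuclideanSpace ℝ (Fin n) := fun x => c • q0 x with hqdef
  have hqsmooth : ContDiff ℝ (⊤:ℕ∞) q := hq0smooth.const_smul c
  have hq0bd : ∀ x ∈ D, ‖q0 x‖ ≤ 1 + ε/3 := by
    intro x hx
    have h1 := hq0close x hx
    have h2 := hFbd x
    calc ‖q0 x‖ = ‖(q0 x - F x) + F x‖ := by rw [sub_add_cancel]
      _ ≤ ‖q0 x - F x‖ + ‖F x‖ := norm_add_le _ _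
      _ ≤ ε/3 + 1 := add_le_add (by rwa [← dist_eq_norm]) h2
      _ = 1 + ε/3 := by ring
  have hqbd : ∀ x ∈ D, ‖q x‖ ≤ 1 := by
    intro x hx
    show ‖c • q0 x‖ ≤ 1
    rw [norm_smul, Real.norm_eq_abs, abs_of_pos hcpos, hcdef]
    rw [inv_mul_le_iff₀ (by positivity), mul_one]
    exact hq0bd x hx
  have hqq0 : ∀ x ∈ D, dist (q x) (q0 x) ≤ ε/3 := by
    intro x hx
    have h1 : q x - q0 x = (c - 1) • q0 x := by
      rw [hqdef]
      show c • q0 x - q0 x = (c - 1) • q0 x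
      rw [sub_smul, one_smul]
    rw [dist_eq_norm, h1, norm_smul, Real.norm_eq_abs]
    have h2 : c - 1 ≤ 0 := by
      rw [hcdef]
      have : (1 + ε/3)⁻¹ ≤ 1 := by
        rw [inv_le_one_iff₀]
        right; linarith
      linarith
    rw [abs_of_nonpos h2]
    have h3 : -(c-1) = (ε/3) * c := by
      rw [hcdef]
      field_simp
      ring
    rw [h3]
    calc ε/3 * c * ‖q0 x‖ ≤ ε/3 * c * (1 + ε/3) := by
          apply mul_le_mul_of_nonneg_left (hq0bd x hx) (by positivity)
      _ = ε/3 := by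
          rw [hcdef]
          field_simp
  have hqfix : ∀ x ∈ D, q x ≠ x := by
    intro x hx heq
    have h1 : dist (f x) x ≤ dist (f x) (q0 x) + dist (q0 x) (q x) + dist (q x) x :=
      dist_triangle4 _ _ _ _
    have h2 : dist (f x) (q0 x) ≤ ε/3 := by
      rw [dist_comm, ← hFD x hx]
      exact hq0close x hx
    have h3 : dist (q0 x) (q x) ≤ ε/3 := by rw [dist_comm]; exact hqq0 x hx
    have h4 : dist (q x) x = 0 := by rw [heq, dist_self]
    have h5 : ε ≤ dist (f x) x := by
      rw [dist_eq_norm]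
      exact hmin x hx
    linarith
  exact no_smooth_fpfree (volume : Measure (EuclideanSpace ℝ (Fin n))) hqsmooth hqbd hqfix
end

section
/- Neither of the graded ℚ-algebras ℚ[x,y]/(x² - y², x³, y³) and ℚ[x,y]/(x² + y², x³, y³) (x, y of degree 2) embeds as a graded subalgebra of the other; consequently neither of ℂP² # ℂP² and ℂP² # (−ℂP²) dominates the other. -/
/-!
Neither of the graded `ℚ`-algebras `ℚ[x,y]/(x² - y², x³, y³)` and
`ℚ[x,y]/(x² + y², x³, y³)` (with `x, y` of degree 2) embeds as a graded subalgebra of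
the other; consequently neither of `ℂP² # ℂP²` and `ℂP² # (−ℂP²)` dominates the other.

These are the rational cohomology rings of the connected sums of two copies of `ℂP²`
with equal, respectively opposite, orientations.  A graded embedding is formalized as an
injective `ℚ`-algebra homomorphism mapping the degree-2 part (the `ℚ`-span of `{x, y}`)
into the degree-2 part.
-/

open MvPolynomial

/-- `H^*(ℂP² # ℂP²; ℚ) = ℚ[x,y]/(x² - y², x³, y³)`, with `x, y` of degree 2. -/
noncomputable abbrev CohomSum : Type :=
  MvPolynomial (Fin 2) ℚ ⧸
    (Ideal.span {(X 0 : MvPolynomial (Fin 2) ℚ) ^ 2 - (X 1 : MvPolynomial (Fin 2) ℚ) ^ 2,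
      (X 0 : MvPolynomial (Fin 2) ℚ) ^ 3, (X 1 : MvPolynomial (Fin 2) ℚ) ^ 3})

noncomputable def xA : CohomSum := Ideal.Quotient.mk _ (X 0)
noncomputable def yA : CohomSum := Ideal.Quotient.mk _ (X 1)

/-- `H^*(ℂP² # (−ℂP²); ℚ) = ℚ[x,y]/(x² + y², x³, y³)`, with `x, y` of degree 2. -/
noncomputable abbrev CohomDiff : Type :=
  MvPolynomial (Fin 2) ℚ ⧸
    (Ideal.span {(X 0 : MvPolynomial (Fin 2) ℚ) ^ 2 + (X 1 : MvPolynomial (Fin 2) ℚ) ^ 2,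
      (X 0 : MvPolynomial (Fin 2) ℚ) ^ 3, (X 1 : MvPolynomial (Fin 2) ℚ) ^ 3})

noncomputable def xB : CohomDiff := Ideal.Quotient.mk _ (X 0)
noncomputable def yB : CohomDiff := Ideal.Quotient.mk _ (X 1)


noncomputable abbrev T3 : Type := Polynomial ℂ ⧸ Ideal.span {(Polynomial.X : Polynomial ℂ) ^ 3}

noncomputable def tt : T3 := Ideal.Quotient.mk _ Polynomial.X

lemma tt_pow3 : tt ^ 3 = 0 := by
  rw [tt, ← map_pow, Ideal.Quotient.eq_zero_iff_mem]
  exact Ideal.subset_span rfl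

lemma smul_tt_pow (u : ℂ) (k : ℕ) :
    u • tt ^ k = Ideal.Quotient.mk _ (Polynomial.C u * Polynomial.X ^ k) := by
  have h : tt ^ k = Ideal.Quotient.mkₐ ℂ (Ideal.span {(Polynomial.X : Polynomial ℂ) ^ 3})
      (Polynomial.X ^ k) := by
    simp [tt, Ideal.Quotient.mkₐ_eq_mk]
  rw [h, ← map_smul, Polynomial.smul_eq_C_mul, Ideal.Quotient.mkₐ_eq_mk]

lemma cancelC {u v : ℂ} {k : ℕ} (hk : k < 3) (h : u • tt ^ k = v • tt ^ k) : u = v := by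
  rw [smul_tt_pow, smul_tt_pow, Ideal.Quotient.eq, Ideal.mem_span_singleton] at h
  obtain ⟨q, hq⟩ := h
  have hq' : (Polynomial.C (u - v)) * Polynomial.X ^ k = q * Polynomial.X ^ 3 := by
    rw [map_sub, sub_mul, hq, mul_comm]
  have h2 := congrArg (fun p => Polynomial.coeff p k) hq'
  simp [Polynomial.coeff_C_mul, Polynomial.coeff_X_pow, Polynomial.coeff_mul_X_pow',
    Nat.not_le.mpr hk, sub_eq_zero] at h2
  exact h2

lemma cancelQ {u v : ℚ} {k : ℕ} (hk : k < 3) (h : u • tt ^ k = v • tt ^ k) : u = v := by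
  have h' : (u : ℂ) • tt ^ k = (v : ℂ) • tt ^ k := by
    rw [show ((u:ℂ)) = algebraMap ℚ ℂ u from rfl, show ((v:ℂ)) = algebraMap ℚ ℂ v from rfl,
      algebraMap_smul, algebraMap_smul, h]
  exact_mod_cast cancelC hk h'

noncomputable def φ1 : CohomSum →ₐ[ℚ] T3 :=
  Ideal.Quotient.liftₐ _ (aeval ![tt, -tt]) (fun a ha => by
    refine (Ideal.span_le.mpr ?_ ha : _ ∈ RingHom.ker (aeval ![tt, -tt] : MvPolynomial (Fin 2) ℚ →ₐ[ℚ] T3).toRingHom)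
    rintro p (rfl | rfl | rfl) <;>
      · show aeval ![tt, -tt] _ = 0
        simp only [map_sub, map_pow, aeval_X, Matrix.cons_val_zero, Matrix.cons_val_one,
          Matrix.head_cons]
        try ring_nf
        try simp [tt_pow3])

noncomputable def φ2 : CohomSum →ₐ[ℚ] T3 :=
  Ideal.Quotient.liftₐ _ (aeval ![tt, tt]) (fun a ha => by
    refine (Ideal.span_le.mpr ?_ ha : _ ∈ RingHom.ker (aeval ![tt, tt] : MvPolynomial (Fin 2) ℚ →ₐ[ℚ] T3).toRingHom)
    rintro p (rfl | rfl | rfl) <;>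
      · show aeval ![tt, tt] _ = 0
        simp only [map_sub, map_pow, aeval_X, Matrix.cons_val_zero, Matrix.cons_val_one,
          Matrix.head_cons]
        try ring_nf
        try simp [tt_pow3])

noncomputable def φ3 : CohomDiff →ₐ[ℚ] T3 :=
  Ideal.Quotient.liftₐ _ (aeval ![tt, Complex.I • tt]) (fun a ha => by
    refine (Ideal.span_le.mpr ?_ ha : _ ∈ RingHom.ker (aeval ![tt, Complex.I • tt] : MvPolynomial (Fin 2) ℚ →ₐ[ℚ] T3).toRingHom)
    rintro p (rfl | rfl | rfl) <;>
      · show aeval ![tt, Complex.I • tt] _ = 0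
        simp only [map_add, map_pow, aeval_X, Matrix.cons_val_zero, Matrix.cons_val_one,
          Matrix.head_cons, smul_pow, Complex.I_sq, tt_pow3, smul_zero, neg_smul, one_smul]
        try ring_nf
        try simp [tt_pow3])

lemma φ1_xA : φ1 xA = tt := by
  show aeval ![tt, -tt] (X 0 : MvPolynomial (Fin 2) ℚ) = tt
  simp
lemma φ1_yA : φ1 yA = -tt := by
  show aeval ![tt, -tt] (X 1 : MvPolynomial (Fin 2) ℚ) = -tt
  simp
lemma φ2_xA : φ2 xA = tt := by
  show aeval ![tt, tt] (X 0 : MvPolynomial (Fin 2) ℚ) = tt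
  simp
lemma φ2_yA : φ2 yA = tt := by
  show aeval ![tt, tt] (X 1 : MvPolynomial (Fin 2) ℚ) = tt
  simp
lemma φ3_xB : φ3 xB = tt := by
  show aeval ![tt, Complex.I • tt] (X 0 : MvPolynomial (Fin 2) ℚ) = tt
  simp
lemma φ3_yB : φ3 yB = Complex.I • tt := by
  show aeval ![tt, Complex.I • tt] (X 1 : MvPolynomial (Fin 2) ℚ) = Complex.I • tt
  simp

lemma relA : xA ^ 2 = yA ^ 2 := by
  rw [xA, yA, ← map_pow, ← map_pow, Ideal.Quotient.eq]
  exact Ideal.subset_span (Set.mem_insert _ _)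

lemma relB : xB ^ 2 = -(yB ^ 2) := by
  rw [xB, yB, ← map_pow, ← map_pow, ← map_neg, Ideal.Quotient.eq]
  rw [sub_neg_eq_add]
  exact Ideal.subset_span (Set.mem_insert _ _)

lemma qsmul_tt (q : ℚ) (x : T3) : q • x = (q : ℂ) • x := by
  rw [show ((q:ℂ)) = algebraMap ℚ ℂ q from rfl, algebraMap_smul]

lemma tt_ne_neg : ¬ (tt = -tt) := by
  intro h
  have h1 : (1 : ℂ) • tt ^ 1 = (-1 : ℂ) • tt ^ 1 := by
    simpa using h
  have := cancelC (by norm_num) h1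
  norm_num at this

set_option maxHeartbeats 1000000 in
set_option synthInstance.maxHeartbeats 200000 in
theorem no_graded_embedding_connected_sums :
    (¬ ∃ ψ : CohomSum →ₐ[ℚ] CohomDiff, Function.Injective ψ ∧
        ψ xA ∈ Submodule.span ℚ ({xB, yB} : Set CohomDiff) ∧
        ψ yA ∈ Submodule.span ℚ ({xB, yB} : Set CohomDiff)) ∧
    (¬ ∃ ψ : CohomDiff →ₐ[ℚ] CohomSum, Function.Injective ψ ∧
        ψ xB ∈ Submodule.span ℚ ({xA, yA} : Set CohomSum) ∧
        ψ yB ∈ Submodule.span ℚ ({xA, yA} : Set CohomSum)) := by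
  constructor
  · rintro ⟨ψ, hinj, hx, hy⟩
    obtain ⟨a, b, hab⟩ := Submodule.mem_span_pair.mp hx
    obtain ⟨c, d, hcd⟩ := Submodule.mem_span_pair.mp hy
    set u : ℂ := (a : ℂ) + b * Complex.I with hu
    set v : ℂ := (c : ℂ) + d * Complex.I with hv
    have hφx : φ3 (ψ xA) = u • tt := by
      rw [← hab, map_add, map_smul, map_smul, φ3_xB, φ3_yB, qsmul_tt, qsmul_tt, hu,
        add_smul, mul_smul]
    have hφy : φ3 (ψ yA) = v • tt := by
      rw [← hcd, map_add, map_smul, map_smul, φ3_xB, φ3_yB, qsmul_tt, qsmul_tt, hv,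
        add_smul, mul_smul]
    have h1 : (ψ xA) ^ 2 = (ψ yA) ^ 2 := by rw [← map_pow, ← map_pow, relA]
    have h2 : u ^ 2 • tt ^ 2 = v ^ 2 • tt ^ 2 := by
      have h3 := congrArg φ3 h1
      rwa [map_pow, map_pow, hφx, hφy, smul_pow, smul_pow] at h3
    have huv : u ^ 2 = v ^ 2 := cancelC (by norm_num) h2
    have hcases : u = v ∨ u = -v := by
      have hf : (u - v) * (u + v) = 0 := by linear_combination huv
      rcases mul_eq_zero.mp hf with h | h
      · exact Or.inl (sub_eq_zero.mp h)
      · exact Or.inr (eq_neg_of_add_eq_zero_left h)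
    rcases hcases with h | h
    · have hre := congrArg Complex.re h
      have him := congrArg Complex.im h
      simp [hu, hv, Complex.add_re, Complex.add_im, Complex.mul_re, Complex.mul_im] at hre him
      have hac : a = c := by exact_mod_cast hre
      have hbd : b = d := by exact_mod_cast him
      have : ψ xA = ψ yA := by rw [← hab, ← hcd, hac, hbd]
      have hxy : xA = yA := hinj this
      have h4 := congrArg φ1 hxy
      rw [φ1_xA, φ1_yA] at h4
      exact tt_ne_neg h4
    · have hre := congrArg Complex.re h
      have him := congrArg Complex.im h
      simp [hu, hv, Complex.add_re, Complex.add_im, Complex.mul_re, Complex.mul_im] at hre him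
      have hac : a = -c := by exact_mod_cast hre
      have hbd : b = -d := by exact_mod_cast him
      have : ψ xA = ψ (-yA) := by
        rw [map_neg, ← hab, ← hcd, hac, hbd]; module
      have hxy : xA = -yA := hinj this
      have h4 := congrArg φ2 hxy
      rw [φ2_xA, map_neg, φ2_yA] at h4
      exact tt_ne_neg h4
  · rintro ⟨ψ, hinj, hx, hy⟩
    obtain ⟨a, b, hab⟩ := Submodule.mem_span_pair.mp hx
    obtain ⟨c, d, hcd⟩ := Submodule.mem_span_pair.mp hy
    have h1 : (ψ xB) ^ 2 + (ψ yB) ^ 2 = 0 := by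
      rw [← map_pow, ← map_pow, relB, map_neg, neg_add_cancel]
    have e2 : φ2 (ψ xB) = (a + b : ℂ) • tt := by
      rw [← hab, map_add, map_smul, map_smul, φ2_xA, φ2_yA, qsmul_tt, qsmul_tt, ← add_smul]
    have e2' : φ2 (ψ yB) = (c + d : ℂ) • tt := by
      rw [← hcd, map_add, map_smul, map_smul, φ2_xA, φ2_yA, qsmul_tt, qsmul_tt, ← add_smul]
    have e1 : φ1 (ψ xB) = (a - b : ℂ) • tt := by
      rw [← hab, map_add, map_smul, map_smul, φ1_xA, φ1_yA, qsmul_tt, qsmul_tt, smul_neg,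
        sub_smul, sub_eq_add_neg]
    have e1' : φ1 (ψ yB) = (c - d : ℂ) • tt := by
      rw [← hcd, map_add, map_smul, map_smul, φ1_xA, φ1_yA, qsmul_tt, qsmul_tt, smul_neg,
        sub_smul, sub_eq_add_neg]
    have g2 : (((a:ℂ) + b) ^ 2 + ((c:ℂ) + d) ^ 2) • tt ^ 2 = (0 : ℂ) • tt ^ 2 := by
      have h3 := congrArg φ2 h1
      rw [map_add, map_pow, map_pow, e2, e2', map_zero, smul_pow, smul_pow, ← add_smul] at h3
      simpa using h3
    have g1 : (((a:ℂ) - b) ^ 2 + ((c:ℂ) - d) ^ 2) • tt ^ 2 = (0 : ℂ) • tt ^ 2 := by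
      have h3 := congrArg φ1 h1
      rw [map_add, map_pow, map_pow, e1, e1', map_zero, smul_pow, smul_pow, ← add_smul] at h3
      simpa using h3
    have q2 : (a + b) ^ 2 + (c + d) ^ 2 = 0 := by
      have := cancelC (u := ((a:ℂ) + b) ^ 2 + ((c:ℂ) + d) ^ 2) (v := 0) (by norm_num) g2
      exact_mod_cast this
    have q1 : (a - b) ^ 2 + (c - d) ^ 2 = 0 := by
      have := cancelC (u := ((a:ℂ) - b) ^ 2 + ((c:ℂ) - d) ^ 2) (v := 0) (by norm_num) g1
      exact_mod_cast this
    have s2 : a + b = 0 := by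
      have h0 : (a + b) ^ 2 = 0 := by nlinarith [sq_nonneg (c + d)]
      exact (pow_eq_zero_iff two_ne_zero).mp h0
    have s1 : a - b = 0 := by
      have h0 : (a - b) ^ 2 = 0 := by nlinarith [sq_nonneg (c - d)]
      exact (pow_eq_zero_iff two_ne_zero).mp h0
    have ha0 : a = 0 := by linarith
    have hb0 : b = 0 := by linarith
    have hz : ψ xB = ψ 0 := by rw [← hab, ha0, hb0, map_zero]; module
    have hx0 : xB = 0 := hinj hz
    have htt0 : tt = 0 := by rw [← φ3_xB, hx0, map_zero]
    have h1' : (1 : ℂ) • tt ^ 1 = (0 : ℂ) • tt ^ 1 := by simp [htt0]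
    have := cancelC (by norm_num) h1'
    norm_num at this
end

section
/- Let Δ be a group and Δ' a finite-index subgroup of Δ. Then Δ is presentable by a product if and only if Δ' is presentable by a product. -/
universe u

/-- A presentation of the group `Δ` by a product: a homomorphism
`φ : Γ₁ × Γ₂ → Δ` such that the images of the two factors are infinite and generate a
subgroup of finite index of `Δ`. -/
structure ProductPresentation (Δ : Type u) [Group Δ] where
  Γ₁ : Type u
  Γ₂ : Type u
  [grp₁ : Group Γ₁]
  [grp₂ : Group Γ₂]
  φ : Γ₁ × Γ₂ →* Δ
  infinite₁ : Infinite ((φ.comp (MonoidHom.inl Γ₁ Γ₂)).range)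
  infinite₂ : Infinite ((φ.comp (MonoidHom.inr Γ₁ Γ₂)).range)
  finiteIndex : ((φ.comp (MonoidHom.inl Γ₁ Γ₂)).range ⊔
      (φ.comp (MonoidHom.inr Γ₁ Γ₂)).range).FiniteIndex

/-- A group is *presentable by a product* if it admits a presentation by a product
(Kotschick–Löh). -/
def PresentableByProduct (Δ : Type u) [Group Δ] : Prop :=
  Nonempty (ProductPresentation Δ)

lemma infinite_of_fi {G : Type*} [Group G] [Infinite G] (H : Subgroup G) (hf : H.FiniteIndex) :
    Infinite H := by
  have hc := H.card_mul_index
  rw [show Nat.card G = 0 from Nat.card_eq_zero_of_infinite] at hc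
  have h0 : Nat.card H = 0 := by
    rcases Nat.mul_eq_zero.mp hc with h' | h'
    · exact h'
    · exact absurd h' hf.index_ne_zero
  rcases Nat.card_eq_zero.mp h0 with h' | h'
  · exact absurd ⟨⟨1, H.one_mem⟩⟩ (not_nonempty_iff.mpr h')
  · exact h'

lemma map_fi_iff {Δ : Type*} [Group Δ] {Δ' : Subgroup Δ} (h : Δ'.FiniteIndex) (S : Subgroup Δ') :
    (S.map Δ'.subtype).FiniteIndex ↔ S.FiniteIndex := by
  have hle : S.map Δ'.subtype ≤ Δ' := by rintro x ⟨y, hy, rfl⟩; exact y.2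
  have hsub : (S.map Δ'.subtype).subgroupOf Δ' = S :=
    Subgroup.comap_map_eq_self_of_injective Δ'.subtype_injective S
  have hrel : (S.map Δ'.subtype).relIndex Δ' = S.index := by
    rw [Subgroup.relIndex, hsub]
  constructor
  · intro hf
    refine ⟨?_⟩
    rw [← hrel]
    show ((S.map Δ'.subtype).subgroupOf Δ').index ≠ 0
    exact (Subgroup.instFiniteIndex_subgroupOf _ _).index_ne_zero
  · intro hf
    refine ⟨fun h0 => ?_⟩
    have := Subgroup.relIndex_mul_index hle
    rw [h0, hrel] at this
    exact mul_ne_zero hf.index_ne_zero h.index_ne_zero this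

noncomputable def aux_toBig (Δ : Type u) [Group Δ] (Δ' : Subgroup Δ) (h : Δ'.FiniteIndex)
    (P : ProductPresentation Δ') : ProductPresentation Δ := by
  letI := P.grp₁; letI := P.grp₂
  refine ⟨P.Γ₁, P.Γ₂, Δ'.subtype.comp P.φ, ?_, ?_, ?_⟩ <;>
    rw [MonoidHom.comp_assoc]
  · rw [MonoidHom.range_comp]
    exact ((P.φ.comp (MonoidHom.inl _ _)).range.equivMapOfInjective Δ'.subtype
      Δ'.subtype_injective).toEquiv.infinite_iff.mp P.infinite₁
  · rw [MonoidHom.range_comp]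
    exact ((P.φ.comp (MonoidHom.inr _ _)).range.equivMapOfInjective Δ'.subtype
      Δ'.subtype_injective).toEquiv.infinite_iff.mp P.infinite₂
  · rw [MonoidHom.comp_assoc,
      MonoidHom.range_comp Δ'.subtype (P.φ.comp (MonoidHom.inl P.Γ₁ P.Γ₂)),
      MonoidHom.range_comp Δ'.subtype (P.φ.comp (MonoidHom.inr P.Γ₁ P.Γ₂)),
      ← Subgroup.map_sup]
    exact (map_fi_iff h _).mpr P.finiteIndex

noncomputable def aux_toSub (Δ : Type u) [Group Δ] (Δ' : Subgroup Δ) (h : Δ'.FiniteIndex)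
    (P : ProductPresentation Δ) : ProductPresentation Δ' := by
  letI := P.grp₁; letI := P.grp₂
  set f₁ := P.φ.comp (MonoidHom.inl P.Γ₁ P.Γ₂) with hf₁
  set f₂ := P.φ.comp (MonoidHom.inr P.Γ₁ P.Γ₂) with hf₂
  set A := Δ'.comap f₁ with hA
  set B := Δ'.comap f₂ with hB
  have hmem : ∀ (a : A) (b : B), P.φ (a.1, b.1) ∈ Δ' := by
    intro a b
    have heq : ((a.1, b.1) : P.Γ₁ × P.Γ₂) = (a.1, 1) * (1, b.1) := by
      simp [Prod.mk_mul_mk]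
    rw [heq, map_mul]
    exact Δ'.mul_mem a.2 b.2
  let ψ : A × B →* Δ' :=
    { toFun := fun p => ⟨P.φ (p.1.1, p.2.1), hmem p.1 p.2⟩
      map_one' := by ext; simp; exact map_one P.φ
      map_mul' := fun p q => by
        ext
        show P.φ _ = P.φ _ * P.φ _
        rw [← map_mul]
        rfl }
  have hr₁ : (ψ.comp (MonoidHom.inl A B)).range.map Δ'.subtype = f₁.range ⊓ Δ' := by
    rw [← Subgroup.map_comap_eq f₁ Δ']
    ext x
    simp only [Subgroup.mem_map, MonoidHom.mem_range]
    constructor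
    · rintro ⟨y, ⟨a, rfl⟩, rfl⟩
      exact ⟨a.1, a.2, rfl⟩
    · rintro ⟨a, ha, rfl⟩
      exact ⟨ψ (MonoidHom.inl A B ⟨a, ha⟩), ⟨⟨a, ha⟩, rfl⟩, rfl⟩
  have hr₂ : (ψ.comp (MonoidHom.inr A B)).range.map Δ'.subtype = f₂.range ⊓ Δ' := by
    rw [← Subgroup.map_comap_eq f₂ Δ']
    ext x
    simp only [Subgroup.mem_map, MonoidHom.mem_range]
    constructor
    · rintro ⟨y, ⟨b, rfl⟩, rfl⟩
      exact ⟨b.1, b.2, rfl⟩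
    · rintro ⟨b, hb, rfl⟩
      exact ⟨ψ (MonoidHom.inr A B ⟨b, hb⟩), ⟨⟨b, hb⟩, rfl⟩, rfl⟩
  haveI hi₁ : Infinite f₁.range := P.infinite₁
  haveI hi₂ : Infinite f₂.range := P.infinite₂
  haveI := h
  have hinf : ∀ (g : Subgroup Δ), Infinite g → Infinite ((g ⊓ Δ' : Subgroup Δ)) := by
    intro g hg
    haveI := hg
    haveI : Infinite (Δ'.subgroupOf g) :=
      infinite_of_fi _ (Subgroup.instFiniteIndex_subgroupOf Δ' g)
    exact Infinite.of_injective
      (fun x : Δ'.subgroupOf g => (⟨x.1.1, x.1.2, x.2⟩ : (g ⊓ Δ' : Subgroup Δ)))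
      (by
        intro x y hxy
        simp only [Subtype.mk.injEq] at hxy
        exact Subtype.ext (Subtype.ext (by have hv := congrArg Subtype.val hxy; exact hv)))
  refine ⟨A, B, ψ, ?_, ?_, ?_⟩
  · have e := ((ψ.comp (MonoidHom.inl A B)).range.equivMapOfInjective Δ'.subtype
      Δ'.subtype_injective).toEquiv
    exact e.infinite_iff.mpr (by rw [hr₁]; exact hinf _ hi₁)
  · have e := ((ψ.comp (MonoidHom.inr A B)).range.equivMapOfInjective Δ'.subtype
      Δ'.subtype_injective).toEquiv
    exact e.infinite_iff.mpr (by rw [hr₂]; exact hinf _ hi₂)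
  · rw [← map_fi_iff h, Subgroup.map_sup, hr₁, hr₂]
    -- the product subgroup has finite index
    have hAi : A.index ≠ 0 := by
      rw [hA, Subgroup.index_comap]
      exact (Subgroup.instFiniteIndex_subgroupOf Δ' f₁.range).index_ne_zero
    have hBi : B.index ≠ 0 := by
      rw [hB, Subgroup.index_comap]
      exact (Subgroup.instFiniteIndex_subgroupOf Δ' f₂.range).index_ne_zero
    have hrange : f₁.range ⊔ f₂.range ≤ P.φ.range := by
      apply sup_le
      · rintro x ⟨y, rfl⟩; exact ⟨MonoidHom.inl _ _ y, rfl⟩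
      · rintro x ⟨y, rfl⟩; exact ⟨MonoidHom.inr _ _ y, rfl⟩
    haveI := P.finiteIndex
    haveI hri : P.φ.range.FiniteIndex := Subgroup.finiteIndex_of_le hrange
    have hmapfi : ((A.prod B).map P.φ).FiniteIndex := by
      refine ⟨?_⟩
      rw [Subgroup.index_map]
      refine mul_ne_zero ?_ hri.index_ne_zero
      refine ne_zero_of_dvd_ne_zero ?_ (Subgroup.index_dvd_of_le le_sup_left)
      rw [Subgroup.index_prod]
      exact mul_ne_zero hAi hBi
    have hle : (A.prod B).map P.φ ≤ (f₁.range ⊓ Δ') ⊔ (f₂.range ⊓ Δ') := by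
      rintro x ⟨⟨a, b⟩, ⟨ha, hb⟩, rfl⟩
      have heq : ((a, b) : P.Γ₁ × P.Γ₂) = (a, 1) * (1, b) := by simp [Prod.mk_mul_mk]
      rw [heq, map_mul]
      exact mul_mem
        (Subgroup.mem_sup_left ⟨⟨a, rfl⟩, ha⟩)
        (Subgroup.mem_sup_right ⟨⟨b, rfl⟩, hb⟩)
    exact Subgroup.finiteIndex_of_le (H := (A.prod B).map P.φ) hle

/-- If `Δ'` is a finite-index subgroup of `Δ`, then `Δ` is presentable by a product if
and only if `Δ'` is presentable by a product. -/
theorem presentableByProduct_iff_finiteIndex_subgroup (Δ : Type u) [Group Δ]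
    (Δ' : Subgroup Δ) (h : Δ'.FiniteIndex) :
    PresentableByProduct Δ ↔ PresentableByProduct Δ' := by
  exact ⟨fun ⟨P⟩ => ⟨aux_toSub Δ Δ' h P⟩, fun ⟨P⟩ => ⟨aux_toBig Δ Δ' h P⟩⟩
end

section
/- An infinite simple group is not presentable by a product. -/
universe u

/-- An infinite simple group is not presentable by a product. -/
theorem not_presentableByProduct_of_infinite_simple (Δ : Type u) [Group Δ]
    [Infinite Δ] (h : IsSimpleGroup Δ) :
    ¬ PresentableByProduct Δ := by
  rintro ⟨P⟩
  letI := P.grp₁; letI := P.grp₂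
  set H₁ := (P.φ.comp (MonoidHom.inl P.Γ₁ P.Γ₂)).range with hH₁
  set H₂ := (P.φ.comp (MonoidHom.inr P.Γ₁ P.Γ₂)).range with hH₂
  haveI : Infinite H₁ := P.infinite₁
  haveI : Infinite H₂ := P.infinite₂
  haveI : (H₁ ⊔ H₂).FiniteIndex := P.finiteIndex
  -- elements of H₁ and H₂ commute
  have hcomm : ∀ a ∈ H₁, ∀ b ∈ H₂, a * b = b * a := by
    rintro _ ⟨x, rfl⟩ _ ⟨y, rfl⟩
    simp only [MonoidHom.comp_apply, MonoidHom.inl_apply, MonoidHom.inr_apply]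
    rw [← map_mul, ← map_mul]
    congr 1
    simp [Prod.ext_iff]
  -- no proper subgroup of finite index, so H₁ ⊔ H₂ = ⊤
  have hsup : H₁ ⊔ H₂ = ⊤ := by
    have hN : (H₁ ⊔ H₂).normalCore.Normal := Subgroup.normalCore_normal _
    haveI : (H₁ ⊔ H₂).normalCore.FiniteIndex := Subgroup.finiteIndex_normalCore _
    rcases h.eq_bot_or_eq_top_of_normal _ hN with hb | ht
    · exfalso
      have : (H₁ ⊔ H₂).normalCore.index = 0 := by
        rw [hb, Subgroup.index_bot, Nat.card_eq_zero_of_infinite]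
      exact (Subgroup.FiniteIndex.index_ne_zero (H := (H₁ ⊔ H₂).normalCore)) this
    · have := Subgroup.normalCore_le (H₁ ⊔ H₂)
      rw [ht] at this
      exact top_le_iff.mp this
  -- each Hᵢ is normal
  have hnorm : ∀ (K L : Subgroup Δ), K ⊔ L = ⊤ →
      (∀ a ∈ K, ∀ b ∈ L, a * b = b * a) → K.Normal := by
    intro K L hKL hc
    rw [← Subgroup.normalizer_eq_top_iff]
    rw [← top_le_iff, ← hKL, sup_le_iff]
    constructor
    · exact Subgroup.le_normalizer
    · intro b hb
      rw [Subgroup.mem_normalizer_iff]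
      intro a
      constructor
      · intro ha
        have := hc a ha b hb
        have : b * a * b⁻¹ = a := by
          rw [← this]; group
        rw [this]; exact ha
      · intro ha
        have key := hc (b * a * b⁻¹) ha b hb
        have : b * a * b⁻¹ = a ∨ True := Or.inr trivial
        have haa : a = b⁻¹ * (b * a * b⁻¹) * b := by group
        rw [haa]
        have : b⁻¹ * (b * a * b⁻¹) * b = b * a * b⁻¹ := by
          have := hc (b * a * b⁻¹) ha b hb
          calc b⁻¹ * (b * a * b⁻¹) * b = b⁻¹ * ((b * a * b⁻¹) * b) := by group
            _ = b⁻¹ * (b * (b * a * b⁻¹)) := by rw [this]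
            _ = b * a * b⁻¹ := by group
        rw [this]; exact ha
    
  have hn₁ : H₁.Normal := hnorm H₁ H₂ hsup hcomm
  have hn₂ : H₂.Normal := by
    refine hnorm H₂ H₁ (by rw [sup_comm]; exact hsup) ?_
    intro a ha b hb
    exact (hcomm b hb a ha).symm
  have ne_bot : ∀ (K : Subgroup Δ), Infinite K → K ≠ ⊥ := by
    intro K hK hKb
    rw [hKb] at hK
    exact (Finite.not_infinite (inferInstance : Finite (⊥ : Subgroup Δ))) hK
  have ht₁ : H₁ = ⊤ := (h.eq_bot_or_eq_top_of_normal H₁ hn₁).resolve_left (ne_bot H₁ inferInstance)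
  have ht₂ : H₂ = ⊤ := (h.eq_bot_or_eq_top_of_normal H₂ hn₂).resolve_left (ne_bot H₂ inferInstance)
  -- hence Δ is commutative
  have hcommAll : ∀ a b : Δ, a * b = b * a := by
    intro a b
    exact hcomm a (ht₁ ▸ Subgroup.mem_top a) b (ht₂ ▸ Subgroup.mem_top b)
  -- an infinite commutative group is not simple
  obtain ⟨g, hg⟩ := exists_ne (1 : Δ)
  have hznorm : ∀ x : Δ, (Subgroup.zpowers x).Normal := by
    intro x
    constructor
    intro n hn a
    have : a * n * a⁻¹ = n := by
      rw [hcommAll a n]; group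
    rw [this]; exact hn
  have hzg : Subgroup.zpowers g = ⊤ :=
    (h.eq_bot_or_eq_top_of_normal _ (hznorm g)).resolve_left (Subgroup.zpowers_ne_bot.2 hg)
  have horder : orderOf g = 0 :=
    Infinite.orderOf_eq_zero_of_forall_mem_zpowers (fun x => hzg ▸ Subgroup.mem_top x)
  have hnfo : ¬ IsOfFinOrder g := by
    rw [← orderOf_eq_zero_iff] at *; exact horder
  have hinj : Function.Injective fun n : ℤ => g ^ n :=
    injective_zpow_iff_not_isOfFinOrder.mpr hnfo
  have hg2 : g ^ (2 : ℤ) ≠ 1 := by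
    intro hh
    have : (2 : ℤ) = 0 := hinj (by simpa using hh)
    norm_num at this
  have hzg2 : Subgroup.zpowers (g ^ (2 : ℤ)) = ⊤ :=
    (h.eq_bot_or_eq_top_of_normal _ (hznorm _)).resolve_left (Subgroup.zpowers_ne_bot.2 hg2)
  have hgmem : g ∈ Subgroup.zpowers (g ^ (2 : ℤ)) := hzg2 ▸ Subgroup.mem_top g
  obtain ⟨k, hk⟩ := hgmem
  have : (g ^ (2 : ℤ)) ^ k = g := hk
  rw [← zpow_mul] at this
  have h2k : 2 * k = 1 := hinj (by simpa using this)
  omega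
end
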